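/- Let n ≥ 2 and let C be the Cartan matrix of type Aₙ. Define the action of the simple reflection s_i on r = (r₁,…,rₙ) ∈ ℤⁿ by (s_i r)_j = r_j − C_{j i}·r_i, i.e., (s_i r)_i = −r_i, (s_i r)_{i±1} = r_{i±1} + r_i, and (s_i r)_j = r_j otherwise. Let σ = s₁ ∘ s₂ ∘ ⋯ ∘ sₙ and let S = r₁ + ⋯ + rₙ. Then for 1 ≤ i ≤ n, σ^i(r) = (r_{n−i+2}, r_{n−i+3}, …, rₙ, −S, r₁, r₂, …, r_{n−i}), where the entry −S occurs in position i. -/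
import Mathlib


lemma Fspec
    (C : ℕ → ℕ → ℤ)
    (hC : ∀ j i, C j i = if j = i then 2 else if j + 1 = i ∨ i + 1 = j then -1 else 0)
    (s : ℕ → (ℕ → ℤ) → (ℕ → ℤ))
    (hs : ∀ i r j, s i r j = r j - C j i * r i) :
    ∀ k, 1 ≤ k → ∀ (x : ℕ → ℤ) (j : ℕ), 1 ≤ j →
      (List.range k).foldr (fun i acc => s (i + 1) acc) x j =
        if j = 1 then -(∑ m ∈ Finset.Icc 1 k, x m)
        else if j ≤ k then x (j - 1)
        else if j = k + 1 then x (k + 1) + x k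
        else x j := by
  intro k hk
  induction k, hk using Nat.le_induction with
  | base =>
    intro x j hj
    have hr : List.range 1 = [0] := rfl
    rw [hr]
    simp only [List.foldr_cons, List.foldr_nil]
    rw [hs]
    rcases Nat.lt_trichotomy j 2 with h | h | h
    · have hj1 : j = 1 := by omega
      subst hj1
      rw [if_pos rfl, hC, if_pos rfl, Finset.Icc_self, Finset.sum_singleton]
      ring
    · subst h
      rw [if_neg (by omega : (2:ℕ) ≠ 1), if_neg (by omega : ¬ (2:ℕ) ≤ 1),
        if_pos rfl, hC, if_neg (by omega : (2:ℕ) ≠ 1),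
        if_pos (Or.inr rfl : (2:ℕ) + 1 = 1 ∨ 1 + 1 = 2)]
      ring
    · rw [if_neg (by omega : j ≠ 1), if_neg (by omega : ¬ j ≤ 1),
        if_neg (by omega : j ≠ 2), hC, if_neg (by omega : j ≠ 1),
        if_neg (by omega : ¬ (j + 1 = 1 ∨ 1 + 1 = j))]
      ring
  | succ k hk ih =>
    intro x j hj
    have hfold : (List.range (k+1)).foldr (fun i acc => s (i + 1) acc) x
        = (List.range k).foldr (fun i acc => s (i + 1) acc) (s (k+1) x) := by
      rw [List.range_succ, List.foldr_append]
      simp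
    rw [hfold, ih (s (k+1) x) j hj]
    have hy : ∀ m, s (k+1) x m = x m - C m (k+1) * x (k+1) := fun m => hs _ _ _
    have hsum : ∑ m ∈ Finset.Icc 1 k, s (k+1) x m
        = (∑ m ∈ Finset.Icc 1 k, x m) + x (k+1) := by
      simp only [hy]
      rw [Finset.sum_sub_distrib]
      have hone : ∑ m ∈ Finset.Icc 1 k, C m (k+1) * x (k+1) = - x (k+1) := by
        rw [Finset.sum_eq_single k]
        · rw [hC, if_neg (by omega : k ≠ k + 1),
            if_pos (Or.inl rfl : k + 1 = k + 1 ∨ k + 1 + 1 = k)]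
          ring
        · intro m hm hmk
          have hm' : m ≤ k := (Finset.mem_Icc.mp hm).2
          rw [hC, if_neg (by omega : m ≠ k + 1),
            if_neg (by omega : ¬ (m + 1 = k + 1 ∨ k + 1 + 1 = m)), zero_mul]
        · intro h
          exact absurd (Finset.mem_Icc.mpr ⟨hk, le_refl k⟩) h
      rw [hone]; ring
    rcases Nat.lt_trichotomy j (k+1) with h | h | h
    · by_cases h1 : j = 1
      · subst h1
        rw [if_pos rfl, if_pos rfl, hsum, Finset.sum_Icc_succ_top (by omega : 1 ≤ k + 1)]
      · have hjk : j ≤ k := by omega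
        rw [if_neg h1, if_neg h1, if_pos hjk, if_pos (by omega : j ≤ k + 1), hy,
          hC, if_neg (by omega : j - 1 ≠ k + 1),
          if_neg (by omega : ¬ (j - 1 + 1 = k + 1 ∨ k + 1 + 1 = j - 1))]
        ring
    · subst h
      rw [if_neg (by omega : k + 1 ≠ 1), if_neg (by omega : k + 1 ≠ 1),
        if_neg (by omega : ¬ k + 1 ≤ k), if_pos (le_refl (k+1)), if_pos rfl,
        hy, hy, hC, hC, if_pos rfl, if_neg (by omega : k ≠ k + 1),
        if_pos (Or.inl rfl : k + 1 = k + 1 ∨ k + 1 + 1 = k),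
        (by omega : k + 1 - 1 = k)]
      ring
    · by_cases h3 : j = k + 2
      · subst h3
        rw [if_neg (by omega : k + 2 ≠ 1), if_neg (by omega : k + 2 ≠ 1),
          if_neg (by omega : ¬ k + 2 ≤ k), if_neg (by omega : ¬ k + 2 ≤ k + 1),
          if_neg (by omega : k + 2 ≠ k + 1), if_pos (rfl : k + 2 = k + 1 + 1),
          hy, hC, if_neg (by omega : k + 2 ≠ k + 1),
          if_pos (Or.inr rfl : k + 2 + 1 = k + 1 ∨ k + 1 + 1 = k + 2)]
        ring
      · rw [if_neg (by omega : j ≠ 1), if_neg (by omega : j ≠ 1),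
          if_neg (by omega : ¬ j ≤ k), if_neg (by omega : ¬ j ≤ k + 1),
          if_neg (by omega : j ≠ k + 1), if_neg (by omega : j ≠ k + 1 + 1),
          hy, hC, if_neg (by omega : j ≠ k + 1),
          if_neg (by omega : ¬ (j + 1 = k + 1 ∨ k + 1 + 1 = j))]
        ring

lemma sum_Icc_one (f : ℕ → ℤ) (k : ℕ) :
    ∑ m ∈ Finset.Icc 1 k, f m = ∑ i ∈ Finset.range k, f (1 + i) := by
  rw [← Finset.Ico_add_one_right_eq_Icc, Finset.sum_Ico_eq_sum_range]
  simp


/-- For the Cartan matrix `C` of type `Aₙ` and the reflection action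
`(sᵢ r)ⱼ = rⱼ − C_{ji}·rᵢ` on `ℤⁿ` (coordinates indexed `1,…,n`), the Coxeter element
`σ = s₁ ∘ s₂ ∘ ⋯ ∘ sₙ` satisfies, for `1 ≤ i ≤ n`,
`σⁱ(r) = (r_{n−i+2}, …, rₙ, −S, r₁, …, r_{n−i})` with `−S = −(r₁+⋯+rₙ)` in position `i`. -/
theorem stmt12 (n : ℕ) (hn : 2 ≤ n)
    (C : ℕ → ℕ → ℤ)
    (hC : ∀ j i, C j i = if j = i then 2 else if j + 1 = i ∨ i + 1 = j then -1 else 0)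
    (s : ℕ → (ℕ → ℤ) → (ℕ → ℤ))
    (hs : ∀ i r j, s i r j = r j - C j i * r i)
    (σ : (ℕ → ℤ) → (ℕ → ℤ))
    (hσ : σ = fun r => (List.range n).foldr (fun i acc => s (i + 1) acc) r)
    (r : ℕ → ℤ) (S : ℤ) (hS : S = ∑ m ∈ Finset.Icc 1 n, r m)
    (i : ℕ) (hi1 : 1 ≤ i) (hin : i ≤ n) :
    ∀ j, 1 ≤ j → j ≤ n →
      (σ^[i] r) j = if j < i then r (n - i + 1 + j) else if j = i then -S else r (j - i) := by
  have hσspec : ∀ (x : ℕ → ℤ) (j : ℕ), 1 ≤ j → j ≤ n →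
      σ x j = if j = 1 then -(∑ m ∈ Finset.Icc 1 n, x m) else x (j - 1) := by
    intro x j hj1 hjn
    simp only [hσ]
    rw [Fspec C hC s hs n (by omega) x j hj1]
    by_cases h1 : j = 1
    · rw [if_pos h1, if_pos h1]
    · rw [if_neg h1, if_neg h1, if_pos hjn]
  have hsumσ : ∀ x : ℕ → ℤ, ∑ m ∈ Finset.Icc 1 n, σ x m = - x n := by
    intro x
    rw [sum_Icc_one]
    have hn1 : n = (n - 1) + 1 := by omega
    rw [hn1, Finset.sum_range_succ']
    have e0 : σ x (1 + 0) = -(∑ m ∈ Finset.Icc 1 n, x m) := by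
      rw [hσspec x 1 le_rfl (by omega)]
      simp
    have e1 : ∀ i ∈ Finset.range (n - 1), σ x (1 + (i + 1)) = x (1 + i) := by
      intro i hi
      have hi' : i < n - 1 := Finset.mem_range.mp hi
      rw [hσspec x (1 + (i + 1)) (by omega) (by omega)]
      rw [if_neg (by omega : 1 + (i + 1) ≠ 1)]
      congr 1
    rw [e0, Finset.sum_congr rfl e1]
    have : ∑ m ∈ Finset.Icc 1 n, x m
        = (∑ i ∈ Finset.range (n - 1), x (1 + i)) + x n := by
      rw [sum_Icc_one, hn1, Finset.sum_range_succ]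
      congr 2
      omega
    rw [this, (by omega : n - 1 + 1 = n)]
    ring
  suffices h : ∀ i, 1 ≤ i → i ≤ n →
      ((∀ j, 1 ≤ j → j ≤ n →
        (σ^[i] r) j = if j < i then r (n - i + 1 + j) else if j = i then -S else r (j - i)) ∧
       (∑ m ∈ Finset.Icc 1 n, (σ^[i] r) m = - r (n - i + 1))) by
    exact (h i hi1 hin).1
  intro i hi1
  induction i, hi1 using Nat.le_induction with
  | base =>
    intro _
    constructor
    · intro j hj1 hjn
      rw [Function.iterate_one, hσspec r j hj1 hjn]
      by_cases h1 : j = 1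
      · subst h1
        rw [if_pos rfl, if_neg (by omega : ¬ (1:ℕ) < 1), if_pos rfl, hS]
      · rw [if_neg h1, if_neg (by omega : ¬ j < 1), if_neg h1]
    · rw [Function.iterate_one, hsumσ]
      have : n - 1 + 1 = n := by omega
      rw [this]
  | succ i hi ihh =>
    intro hi1n
    obtain ⟨ih1, ih2⟩ := ihh (by omega)
    have hit : σ^[i+1] r = σ (σ^[i] r) := Function.iterate_succ_apply' σ i r
    constructor
    · intro j hj1 hjn
      rw [hit, hσspec _ j hj1 hjn]
      by_cases h1 : j = 1
      · subst h1
        rw [if_pos rfl, ih2, if_pos (by omega : 1 < i + 1), neg_neg]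
        congr 1
        omega
      · rw [if_neg h1, ih1 (j - 1) (by omega) (by omega)]
        rcases Nat.lt_trichotomy (j - 1) i with h | h | h
        · rw [if_pos h, if_pos (by omega : j < i + 1)]
          congr 1
          omega
        · rw [if_neg (by omega : ¬ j - 1 < i), if_pos h,
            if_neg (by omega : ¬ j < i + 1), if_pos (by omega : j = i + 1)]
        · rw [if_neg (by omega : ¬ j - 1 < i), if_neg (by omega : j - 1 ≠ i),
            if_neg (by omega : ¬ j < i + 1), if_neg (by omega : j ≠ i + 1)]
          congr 1
          omega
    · rw [hit, hsumσ, ih1 n (by omega) (le_refl n),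
        if_neg (by omega : ¬ n < i), if_neg (by omega : n ≠ i)]
      congr 2
      omega
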